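/- (Christoffel–Darboux formula.) Let T be a (p,q)-banded matrix with nonvanishing extreme diagonals, with determinantal polynomials Q_{n,N} and R_{n,N}. Then for every N ∈ ℕ and all x, y ∈ ℝ: α_N · β_N · (x − y) · ∑_{n=0}^{N} Q_{n,N}(x) · R_{n,N}(y) = P_{N+1}(x)·P_N(y) − P_N(x)·P_{N+1}(y). -/

import Mathlib

open Finset Polynomial Matrix

private def cycE (p N : ℕ) : (Fin (p+1) ⊕ Fin N) ≃ (Fin (N+1) ⊕ Fin p) where
  toFun s := match s with
    | .inl k => if h : (k:ℕ) = 0 then .inl (Fin.last N) else .inr ⟨(k:ℕ)-1, by omega⟩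
    | .inr j => .inl ⟨(j:ℕ), by omega⟩
  invFun s := match s with
    | .inl i => if h : (i:ℕ) = N then .inl 0 else .inr ⟨(i:ℕ), by omega⟩
    | .inr a => .inl ⟨(a:ℕ)+1, by omega⟩
  left_inv := by
    rintro (k | j)
    · rcases Nat.eq_zero_or_pos (k:ℕ) with h | h
      · simp [h, Fin.ext_iff]
      · have h' : (k:ℕ) ≠ 0 := by omega
        simp [h', Fin.ext_iff]
        omega
    · have : (j:ℕ) ≠ N := by omega
      simp [this]
  right_inv := by
    rintro (i | a)
    · rcases eq_or_ne (i:ℕ) N with h | h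
      · simp [h, Fin.ext_iff]
      · simp [h]
    · simp [Fin.ext_iff]

private def cycρ (p N : ℕ) : Equiv.Perm (Fin (N+1) ⊕ Fin p) :=
  (cycE p N).permCongr (Equiv.sumCongr (finRotate (p+1)) (Equiv.refl (Fin N)))

private lemma sign_cycρ (p N : ℕ) : Equiv.Perm.sign (cycρ p N) = (-1)^p := by
  rw [cycρ, Equiv.Perm.sign_permCongr, Equiv.Perm.sign_sumCongr, sign_finRotate]
  simp

private lemma cycρ_spec (p N : ℕ) (hp : 1 ≤ p) (s : Fin (N+1) ⊕ Fin p) :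
    (Sum.elim (fun i : Fin (N+1) => if (i:ℕ) = N then N + p else (i:ℕ))
      (fun a : Fin p => N + (a:ℕ))) (cycρ p N s)
    = Sum.elim (fun i : Fin (N+1) => (i:ℕ)) (fun a : Fin p => N+1+(a:ℕ)) s := by
  rcases s with i | a
  · rcases eq_or_ne (i:ℕ) N with h | h
    · have e1 : cycρ p N (.inl i) = (cycE p N) (.inl (finRotate (p+1) 0)) := by
        simp [cycρ, Equiv.permCongr_apply, cycE, h]
      rw [finRotate_succ_apply, zero_add] at e1
      have hv : ((1 : Fin (p+1)) : ℕ) = 1 := by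
        rw [Fin.val_one']
        exact Nat.mod_eq_of_lt (by omega)
      have e2 : (cycE p N) (.inl 1) = .inr ⟨0, hp⟩ := by
        simp only [cycE, Equiv.coe_fn_mk, hv]
        simp [Fin.ext_iff]
      rw [e1, e2]
      simp [h]
    · have e1 : cycρ p N (.inl i) = .inl i := by
        simp [cycρ, Equiv.permCongr_apply, cycE, h]
      rw [e1]; simp [h]
  · have e0 : (cycE p N).symm (.inr a) = .inl ⟨(a:ℕ)+1, by omega⟩ := by
      simp [cycE]
    have e1 : cycρ p N (.inr a) = (cycE p N) (.inl (⟨(a:ℕ)+1, by omega⟩ + 1)) := by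
      simp [cycρ, Equiv.permCongr_apply, e0]
    rcases eq_or_ne ((a:ℕ)+1) p with h | h
    · have hl : (⟨(a:ℕ)+1, by omega⟩ + 1 : Fin (p+1)) = 0 := by
        apply Fin.ext
        simp [Fin.add_def, h]
      rw [hl] at e1
      have e2 : (cycE p N) (.inl 0) = .inl (Fin.last N) := by simp [cycE]
      rw [e1, e2]
      simp
      omega
    · have hl : (⟨(a:ℕ)+1, by omega⟩ + 1 : Fin (p+1)) = ⟨(a:ℕ)+2, by omega⟩ := by
        apply Fin.ext
        simp [Fin.add_def]
        omega
      rw [hl] at e1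
      have e2 : (cycE p N) (.inl ⟨(a:ℕ)+2, by omega⟩) = .inr ⟨(a:ℕ)+1, by omega⟩ := by
        simp [cycE]
      rw [e1, e2]
      simp
      omega

private lemma sum_nid (N p : ℕ) (g : ℕ → Polynomial ℝ) :
    (∑ c : Fin (N+1) ⊕ Fin p,
      g (Sum.elim (fun i : Fin (N+1) => (i:ℕ)) (fun a : Fin p => N+1+(a:ℕ)) c))
      = ∑ m ∈ range (N+1+p), g m := by
  rw [Fintype.sum_sum_type]
  simp only [Sum.elim_inl, Sum.elim_inr]
  have h1 : (∑ i : Fin (N+1), g (i:ℕ)) = ∑ m ∈ range (N+1), g m :=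
    Fin.sum_univ_eq_sum_range (fun m => g m) (N+1)
  have h2 : (∑ a : Fin p, g (N+1+(a:ℕ))) = ∑ m ∈ Ico (N+1) (N+1+p), g m := by
    rw [Finset.sum_Ico_eq_sum_range]
    simp only [Nat.add_sub_cancel_left]
    exact (Fin.sum_univ_eq_sum_range (fun x => g (N+1+x)) p)
  rw [h1, h2, Finset.range_eq_Ico, Finset.range_eq_Ico]
  exact Finset.sum_Ico_consecutive g (by omega : 0 ≤ N+1) (by omega : N+1 ≤ N+1+p)

section
variable (p q N : ℕ) (T : ℕ → ℕ → ℝ) (A : ℕ → ℕ → Polynomial ℝ)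

private lemma key_det (hp : 1 ≤ p)
    (hband : ∀ i j, (j + p < i ∨ i + q < j) → T i j = 0)
    (hArec : ∀ a, 1 ≤ a → a ≤ p → ∀ n,
      ∑ m ∈ Finset.Icc (n - q) (n + p), A a m * Polynomial.C (T m n) = Polynomial.X * A a n) :
    (Matrix.of fun i j : Fin (N+1) =>
        (if (i:ℕ) = (j:ℕ) then (X:Polynomial ℝ) else 0) - C (T i j)).det
      * (Matrix.of fun a b : Fin p => A ((a:ℕ)+1) (N + (b:ℕ))).det
    = (-1:Polynomial ℝ)^(p+1) * C (T (N+p) N)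
      * (Matrix.of fun i j : Fin N =>
          (if (i:ℕ) = (j:ℕ) then (X:Polynomial ℝ) else 0) - C (T i j)).det
      * (Matrix.of fun a b : Fin p => A ((a:ℕ)+1) (N + 1 + (b:ℕ))).det := by
  classical
  set cm : ℕ → ℕ → Polynomial ℝ :=
    fun i j => (if i = j then (X:Polynomial ℝ) else 0) - C (T i j) with hcm
  have cm_def : ∀ i j : ℕ, cm i j = (if i = j then (X:Polynomial ℝ) else 0) - C (T i j) :=
    fun _ _ => rfl
  set nid : (Fin (N+1) ⊕ Fin p) → ℕ :=
    Sum.elim (fun i : Fin (N+1) => (i:ℕ)) (fun a : Fin p => N+1+(a:ℕ)) with hnid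
  set rid : (Fin (N+1) ⊕ Fin p) → ℕ :=
    Sum.elim (fun i : Fin (N+1) => if (i:ℕ) = N then N + p else (i:ℕ))
      (fun a : Fin p => N + (a:ℕ)) with hrid
  set Ψ : Matrix (Fin (N+1) ⊕ Fin p) (Fin (N+1) ⊕ Fin p) (Polynomial ℝ) :=
    Matrix.fromBlocks 1 0
      (Matrix.of fun (a : Fin p) (j : Fin (N+1)) => A ((a:ℕ)+1) (j:ℕ))
      (Matrix.of fun a b : Fin p => A ((a:ℕ)+1) (N+1+(b:ℕ))) with hΨ
  set Φ : Matrix (Fin (N+1) ⊕ Fin p) (Fin (N+1) ⊕ Fin p) (Polynomial ℝ) :=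
    fun s t => Sum.elim (fun n : Fin (N+1) => cm (nid s) (n:ℕ))
      (fun b : Fin p => if nid s = N + (b:ℕ) then 1 else 0) t with hΦdef
  set Φn : Matrix (Fin (N+1) ⊕ Fin p) (Fin (N+1) ⊕ Fin p) (Polynomial ℝ) :=
    fun s t => Sum.elim (fun n : Fin (N+1) => cm (rid s) (n:ℕ))
      (fun b : Fin p => if rid s = N + (b:ℕ) then 1 else 0) t with hΦndef
  -- Φ is a row permutation of Φn
  have hperm : Φ = Φn.submatrix (cycρ p N) id := by
    refine Matrix.ext fun s t => ?_
    have h := cycρ_spec p N hp s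
    show Φ s t = Φn (cycρ p N s) t
    simp only [hΦdef, hΦndef]
    rw [show rid ((cycρ p N) s) = nid s from h]
  -- Φn is block lower triangular
  have hΦn : Φn = Matrix.fromBlocks
      (Matrix.of fun i n : Fin (N+1) => cm (if (i:ℕ) = N then N + p else (i:ℕ)) (n:ℕ)) 0
      (Matrix.of fun (a : Fin p) (n : Fin (N+1)) => cm (N + (a:ℕ)) (n:ℕ)) 1 := by
    refine Matrix.ext fun s t => ?_
    rcases s with i | a <;> rcases t with n | b <;>
      simp only [hΦndef, Sum.elim_inl, Sum.elim_inr, hrid, Matrix.fromBlocks_apply₁₁,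
        Matrix.fromBlocks_apply₁₂, Matrix.fromBlocks_apply₂₁, Matrix.fromBlocks_apply₂₂,
        Matrix.of_apply, Matrix.zero_apply, Matrix.one_apply]
    · have hb : (b:ℕ) < p := b.isLt
      have h' : ¬ ((if (i:ℕ) = N then N + p else (i:ℕ)) = N + (b:ℕ)) := by
        rcases eq_or_ne ((i:ℕ)) N with h | h
        · rw [if_pos h]; omega
        · rw [if_neg h]; have hi : (i:ℕ) < N + 1 := i.isLt; omega
      exact if_neg h'
    · have hab : (N + (a:ℕ) = N + (b:ℕ)) ↔ (a = b) := by
        rw [Fin.ext_iff]; omega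
      by_cases h : a = b
      · exact (if_pos (hab.mpr h)).trans (if_pos h).symm
      · exact (if_neg (fun hc => h (hab.mp hc))).trans (if_neg h).symm
  -- determinant of Φn
  have hdetΦn : Φn.det =
      (Matrix.of fun i n : Fin (N+1) => cm (if (i:ℕ) = N then N + p else (i:ℕ)) (n:ℕ)).det := by
    rw [hΦn, Matrix.det_fromBlocks_zero₁₂, Matrix.det_one, mul_one]
  -- determinant of the TL block
  have hdetTL : (Matrix.of fun i n : Fin (N+1) =>
        cm (if (i:ℕ) = N then N + p else (i:ℕ)) (n:ℕ)).det
      = (Matrix.of fun i j : Fin N => cm (i:ℕ) (j:ℕ)).det * (- C (T (N+p) N)) := by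
    have e := Matrix.det_submatrix_equiv_self (finSumFinEquiv : Fin N ⊕ Fin 1 ≃ Fin (N+1))
      (Matrix.of fun i n : Fin (N+1) => cm (if (i:ℕ) = N then N + p else (i:ℕ)) (n:ℕ))
    rw [← e]
    have hsub : ((Matrix.of fun i n : Fin (N+1) =>
          cm (if (i:ℕ) = N then N + p else (i:ℕ)) (n:ℕ)).submatrix
            finSumFinEquiv finSumFinEquiv)
        = Matrix.fromBlocks (Matrix.of fun i j : Fin N => cm (i:ℕ) (j:ℕ))
            (Matrix.of fun (i : Fin N) (_ : Fin 1) => cm (i:ℕ) N)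
            0 (Matrix.of fun (_ _ : Fin 1) => - C (T (N+p) N)) := by
      refine Matrix.ext fun s t => ?_
      rcases s with i | u <;> rcases t with j | v <;>
        simp only [Matrix.submatrix_apply, finSumFinEquiv_apply_left, finSumFinEquiv_apply_right,
          Matrix.of_apply, Matrix.fromBlocks_apply₁₁, Matrix.fromBlocks_apply₁₂,
          Matrix.fromBlocks_apply₂₁, Matrix.fromBlocks_apply₂₂, Matrix.zero_apply,
          Fin.coe_castAdd, Fin.natAdd_mk, Fin.coe_natAdd]
      · have hi : (i:ℕ) < N := i.isLt
        rw [if_neg (by omega : ¬ (i:ℕ) = N)]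
      · have hi : (i:ℕ) < N := i.isLt
        have hv : (v:ℕ) < 1 := v.isLt
        rw [if_neg (by omega : ¬ (i:ℕ) = N), (by omega : N + (v:ℕ) = N)]
      · have hu : (u:ℕ) < 1 := u.isLt
        have hj : (j:ℕ) < N := j.isLt
        rw [if_pos (by omega : N + (u:ℕ) = N), cm_def]
        have h0 : T (N+p) ((j:ℕ)) = 0 := hband _ _ (Or.inl (by omega))
        rw [h0, map_zero, sub_zero, if_neg (by omega : ¬ (N + p = (j:ℕ)))]
      · have hu : (u:ℕ) < 1 := u.isLt
        have hv : (v:ℕ) < 1 := v.isLt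
        rw [if_pos (by omega : N + (u:ℕ) = N), (by omega : N + (v:ℕ) = N), cm_def,
          if_neg (by omega : ¬ (N + p = N)), zero_sub]
    rw [hsub, Matrix.det_fromBlocks_zero₂₁]
    congr 1
    rw [Matrix.det_fin_one]
    rfl
  -- determinant of Φ
  have hdetΦ : Φ.det = (-1:Polynomial ℝ)^p *
      ((Matrix.of fun i j : Fin N => cm (i:ℕ) (j:ℕ)).det * (- C (T (N+p) N))) := by
    rw [hperm, Matrix.det_permute, sign_cycρ, hdetΦn, hdetTL]
    simp only [Units.val_pow_eq_pow_val, Units.val_neg, Units.val_one, Int.cast_pow,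
      Int.cast_neg, Int.cast_one]
  -- write Φ as blocks
  have hΦblocks : Φ = Matrix.fromBlocks
      (Matrix.of fun i n : Fin (N+1) => cm (i:ℕ) (n:ℕ))
      (Matrix.of fun (i : Fin (N+1)) (b : Fin p) => if (i:ℕ) = N + (b:ℕ) then (1:Polynomial ℝ) else 0)
      (Matrix.of fun (a : Fin p) (n : Fin (N+1)) => cm (N+1+(a:ℕ)) (n:ℕ))
      (Matrix.of fun (a b : Fin p) => if N+1+(a:ℕ) = N + (b:ℕ) then (1:Polynomial ℝ) else 0) := by
    refine Matrix.ext fun s t => ?_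
    rcases s with i | a <;> rcases t with n | b <;> rfl
  have hsum2 : ∀ gg : ℕ → Polynomial ℝ,
      ((∑ j : Fin (N+1), gg (j:ℕ)) + (∑ c : Fin p, gg (N+1+(c:ℕ))))
        = ∑ m ∈ range (N+1+p), gg m := by
    intro gg
    rw [← sum_nid N p gg, Fintype.sum_sum_type]
    simp
  -- the product
  have hmul : Ψ * Φ = Matrix.fromBlocks
      (Matrix.of fun i n : Fin (N+1) => cm (i:ℕ) (n:ℕ))
      (Matrix.of fun (i : Fin (N+1)) (b : Fin p) => if (i:ℕ) = N + (b:ℕ) then (1:Polynomial ℝ) else 0)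
      0 (Matrix.of fun a b : Fin p => A ((a:ℕ)+1) (N + (b:ℕ))) := by
    rw [hΨ, hΦblocks, Matrix.fromBlocks_multiply]
    rw [Matrix.one_mul, Matrix.one_mul, Matrix.zero_mul, Matrix.zero_mul, add_zero, add_zero]
    have hBL : (Matrix.of fun (a : Fin p) (j : Fin (N+1)) => A ((a:ℕ)+1) (j:ℕ))
          * (Matrix.of fun i n : Fin (N+1) => cm (i:ℕ) (n:ℕ))
        + (Matrix.of fun a b : Fin p => A ((a:ℕ)+1) (N+1+(b:ℕ)))
          * (Matrix.of fun (a : Fin p) (n : Fin (N+1)) => cm (N+1+(a:ℕ)) (n:ℕ)) = 0 := by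
      refine Matrix.ext fun a n => ?_
      simp only [Matrix.add_apply, Matrix.mul_apply, Matrix.of_apply, Matrix.zero_apply]
      rw [hsum2 (fun m => A ((a:ℕ)+1) m * cm m (n:ℕ))]
      have hsplit : ∀ m : ℕ, A ((a:ℕ)+1) m * cm m (n:ℕ)
          = (if m = (n:ℕ) then A ((a:ℕ)+1) m * X else 0) - A ((a:ℕ)+1) m * C (T m (n:ℕ)) := by
        intro m
        rw [cm_def, mul_sub]
        congr 1
        by_cases h : m = (n:ℕ) <;> simp [h]
      simp only [hsplit]
      rw [Finset.sum_sub_distrib]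
      rw [Finset.sum_ite_eq' (range (N+1+p)) ((n:ℕ)) (fun m => A ((a:ℕ)+1) m * X)]
      rw [if_pos (by simp [Finset.mem_range]; omega : (n:ℕ) ∈ range (N+1+p))]
      have hrestrict : ∑ m ∈ range (N+1+p), A ((a:ℕ)+1) m * C (T m (n:ℕ))
          = ∑ m ∈ Finset.Icc ((n:ℕ) - q) ((n:ℕ) + p), A ((a:ℕ)+1) m * C (T m (n:ℕ)) := by
        refine (Finset.sum_subset ?_ ?_).symm
        · intro m hm
          simp only [Finset.mem_Icc] at hm
          simp only [Finset.mem_range]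
          have := n.isLt
          omega
        · intro m hm hm'
          simp only [Finset.mem_Icc] at hm'
          have hT : T m (n:ℕ) = 0 := by
            rcases Nat.lt_or_ge m ((n:ℕ) - q) with h | h
            · exact hband _ _ (Or.inr (by omega))
            · exact hband _ _ (Or.inl (by omega))
          rw [hT, map_zero, mul_zero]
      rw [hrestrict, hArec ((a:ℕ)+1) (by omega) (by omega : (a:ℕ)+1 ≤ p)]
      ring
    have hBR : (Matrix.of fun (a : Fin p) (j : Fin (N+1)) => A ((a:ℕ)+1) (j:ℕ))
          * (Matrix.of fun (i : Fin (N+1)) (b : Fin p) => if (i:ℕ) = N + (b:ℕ) then (1:Polynomial ℝ) else 0)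
        + (Matrix.of fun a b : Fin p => A ((a:ℕ)+1) (N+1+(b:ℕ)))
          * (Matrix.of fun (a b : Fin p) => if N+1+(a:ℕ) = N + (b:ℕ) then (1:Polynomial ℝ) else 0)
        = (Matrix.of fun a b : Fin p => A ((a:ℕ)+1) (N + (b:ℕ))) := by
      refine Matrix.ext fun a b => ?_
      simp only [Matrix.add_apply, Matrix.mul_apply, Matrix.of_apply]
      rw [hsum2 (fun m => A ((a:ℕ)+1) m * (if m = N + (b:ℕ) then 1 else 0))]
      simp only [mul_ite, mul_one, mul_zero]
      rw [Finset.sum_ite_eq' (range (N+1+p)) (N + (b:ℕ)) (fun m => A ((a:ℕ)+1) m)]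
      rw [if_pos (by simp only [Finset.mem_range]; have := b.isLt; omega)]
    rw [hBL, hBR]
  -- determinant of Ψ
  have hdetΨ : Ψ.det = (Matrix.of fun a b : Fin p => A ((a:ℕ)+1) (N+1+(b:ℕ))).det := by
    rw [hΨ, Matrix.det_fromBlocks_zero₁₂, Matrix.det_one, one_mul]
  -- conclude
  have h1 : (Ψ * Φ).det = (Matrix.of fun i n : Fin (N+1) => cm (i:ℕ) (n:ℕ)).det
      * (Matrix.of fun a b : Fin p => A ((a:ℕ)+1) (N + (b:ℕ))).det := by
    rw [hmul, Matrix.det_fromBlocks_zero₂₁]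
  have h2 : (Ψ * Φ).det = (Matrix.of fun a b : Fin p => A ((a:ℕ)+1) (N+1+(b:ℕ))).det
      * ((-1:Polynomial ℝ)^p *
        ((Matrix.of fun i j : Fin N => cm (i:ℕ) (j:ℕ)).det * (- C (T (N+p) N)))) := by
    rw [Matrix.det_mul, hdetΨ, hdetΦ]
  have h3 := h1.symm.trans h2
  have hL : (Matrix.of fun i j : Fin (N+1) =>
      (if (i:ℕ) = (j:ℕ) then (X:Polynomial ℝ) else 0) - C (T i j))
      = (Matrix.of fun i n : Fin (N+1) => cm (i:ℕ) (n:ℕ)) := rfl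
  have hS : (Matrix.of fun i j : Fin N =>
      (if (i:ℕ) = (j:ℕ) then (X:Polynomial ℝ) else 0) - C (T i j))
      = (Matrix.of fun i j : Fin N => cm (i:ℕ) (j:ℕ)) := rfl
  rw [hL, hS, h3]
  ring

private lemma det_cm_charpoly (T : ℕ → ℕ → ℝ) (M : ℕ) :
    (Matrix.of fun i j : Fin (M+1) =>
      (if (i:ℕ) = (j:ℕ) then (X:Polynomial ℝ) else 0) - C (T i j)).det
    = (Matrix.of fun i j : Fin (M+1) => T i j).charpoly := by
  rw [Matrix.charpoly]
  congr 1
  refine Matrix.ext fun i j => ?_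
  rw [Matrix.charmatrix_apply]
  simp [Matrix.diagonal_apply, Fin.val_inj]

private lemma det_cm_ne_zero (T : ℕ → ℕ → ℝ) (N : ℕ) :
    (Matrix.of fun i j : Fin N =>
      (if (i:ℕ) = (j:ℕ) then (X:Polynomial ℝ) else 0) - C (T i j)).det ≠ 0 := by
  cases N with
  | zero => rw [Matrix.det_isEmpty]; exact one_ne_zero
  | succ M =>
    rw [det_cm_charpoly]
    exact (Matrix.charpoly_monic _).ne_zero

private lemma det_cm_eq (hp : 1 ≤ p)
    (hband : ∀ i j, (j + p < i ∨ i + q < j) → T i j = 0)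
    (hext : ∀ n, T (n + p) n ≠ 0)
    (hA0 : ∀ a, 1 ≤ a → a ≤ p → ∀ n, n < a - 1 → A a n = 0)
    (hA1 : ∀ a, 1 ≤ a → a ≤ p → A a (a - 1) = 1)
    (hArec : ∀ a, 1 ≤ a → a ≤ p → ∀ n,
      ∑ m ∈ Finset.Icc (n - q) (n + p), A a m * Polynomial.C (T m n) = Polynomial.X * A a n) :
    ∀ N : ℕ, (Matrix.of fun i j : Fin N =>
        (if (i:ℕ) = (j:ℕ) then (X:Polynomial ℝ) else 0) - C (T i j)).det
      = C ((-1:ℝ)^((p-1)*N) * ∏ k ∈ range N, T (k+p) k)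
        * (Matrix.of fun a b : Fin p => A ((a:ℕ)+1) (N + (b:ℕ))).det := by
  intro N
  induction N with
  | zero =>
    rw [Matrix.det_isEmpty]
    simp only [Nat.mul_zero, pow_zero, Finset.range_zero, Finset.prod_empty, mul_one, _root_.map_one,
      one_mul]
    symm
    have htri : (Matrix.of fun a b : Fin p => A ((a:ℕ)+1) (0 + (b:ℕ))).BlockTriangular id := by
      intro a b hab
      simp only [id_eq] at hab
      simp only [Matrix.of_apply, Nat.zero_add]
      exact hA0 ((a:ℕ)+1) (by omega) (by have := a.isLt; omega) _ (by simpa using hab)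
    rw [Matrix.det_of_upperTriangular htri]
    refine Finset.prod_eq_one fun a _ => ?_
    have := hA1 ((a:ℕ)+1) (by omega) (by have := a.isLt; omega)
    simpa using this
  | succ N ih =>
    have hkey := key_det p q N T A hp hband hArec
    rw [ih] at hkey
    have hDN : (Matrix.of fun a b : Fin p => A ((a:ℕ)+1) (N + (b:ℕ))).det ≠ 0 := by
      intro h0
      apply det_cm_ne_zero T N
      rw [ih, h0, mul_zero]
    have hpow : (-1:Polynomial ℝ)^(p+1) = (-1:Polynomial ℝ)^(p-1) := by
      obtain ⟨m, rfl⟩ : ∃ m, p = m + 1 := ⟨p-1, by omega⟩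
      simp only [Nat.add_sub_cancel]
      rw [show m + 1 + 1 = m + 2 from rfl, pow_add]
      norm_num
    have hαstep : C ((-1:ℝ)^((p-1)*(N+1)) * ∏ k ∈ range (N+1), T (k+p) k)
        = (-1:Polynomial ℝ)^(p+1) * C (T (N+p) N)
          * C ((-1:ℝ)^((p-1)*N) * ∏ k ∈ range N, T (k+p) k) := by
      rw [prod_range_succ, show (p-1)*(N+1) = (p-1)*N + (p-1) by ring, pow_add]
      simp only [_root_.map_mul, map_pow, _root_.map_neg, _root_.map_one]
      rw [hpow]
      ring
    refine mul_right_cancel₀ hDN ?_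
    rw [hkey, hαstep]
    ring

private lemma det_updateRow_finset_sum (M : Matrix (Fin p) (Fin p) (Polynomial ℝ)) (i0 : Fin p)
    (s : Finset ℕ) (f : ℕ → Fin p → Polynomial ℝ) :
    (M.updateRow i0 (∑ m ∈ s, f m)).det = ∑ m ∈ s, (M.updateRow i0 (f m)).det := by
  classical
  induction s using Finset.induction_on with
  | empty =>
    rw [Finset.sum_empty, Finset.sum_empty]
    exact Matrix.det_eq_zero_of_row_eq_zero i0 (fun j => by simp)
  | insert _ _ hm ih =>
    rw [Finset.sum_insert hm, Finset.sum_insert hm, Matrix.det_updateRow_add, ih]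

private lemma QM_rec (hp : 1 ≤ p)
    (hArec : ∀ a, 1 ≤ a → a ≤ p → ∀ n,
      ∑ m ∈ Finset.Icc (n - q) (n + p), A a m * Polynomial.C (T m n) = Polynomial.X * A a n)
    (n : ℕ) :
    ∑ m ∈ Finset.Icc (n - q) (n + p), C (T m n) * (Matrix.of fun i a : Fin p =>
        if (i:ℕ) = 0 then A ((a:ℕ)+1) m else A ((a:ℕ)+1) (N + (i:ℕ))).det
      = X * (Matrix.of fun i a : Fin p =>
        if (i:ℕ) = 0 then A ((a:ℕ)+1) n else A ((a:ℕ)+1) (N + (i:ℕ))).det := by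
  classical
  set i0 : Fin p := ⟨0, hp⟩ with hi0
  set base : Matrix (Fin p) (Fin p) (Polynomial ℝ) := Matrix.of fun i a : Fin p =>
    if (i:ℕ) = 0 then A ((a:ℕ)+1) n else A ((a:ℕ)+1) (N + (i:ℕ)) with hbase
  have hup : ∀ m : ℕ, (Matrix.of fun i a : Fin p =>
      if (i:ℕ) = 0 then A ((a:ℕ)+1) m else A ((a:ℕ)+1) (N + (i:ℕ)))
      = base.updateRow i0 (fun a => A ((a:ℕ)+1) m) := by
    intro m
    refine Matrix.ext fun k a => ?_
    by_cases hk : k = i0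
    · subst hk
      rw [Matrix.updateRow_self]
      show (if (0:ℕ) = 0 then A ((a:ℕ)+1) m else A ((a:ℕ)+1) (N+0)) = A ((a:ℕ)+1) m
      exact if_pos rfl
    · rw [Matrix.updateRow_ne hk]
      have hk' : (k:ℕ) ≠ 0 := by
        intro h0
        exact hk (Fin.ext h0)
      show (if (k:ℕ) = 0 then A ((a:ℕ)+1) m else A ((a:ℕ)+1) (N + (k:ℕ)))
        = (if (k:ℕ) = 0 then A ((a:ℕ)+1) n else A ((a:ℕ)+1) (N + (k:ℕ)))
      rw [if_neg hk', if_neg hk']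
  calc ∑ m ∈ Finset.Icc (n - q) (n + p), C (T m n) * (Matrix.of fun i a : Fin p =>
        if (i:ℕ) = 0 then A ((a:ℕ)+1) m else A ((a:ℕ)+1) (N + (i:ℕ))).det
      = ∑ m ∈ Finset.Icc (n - q) (n + p),
          (base.updateRow i0 ((C (T m n) : Polynomial ℝ) • (fun a : Fin p => A ((a:ℕ)+1) m))).det := by
        refine Finset.sum_congr rfl fun m _ => ?_
        rw [hup m, Matrix.det_updateRow_smul]
    _ = (base.updateRow i0 (∑ m ∈ Finset.Icc (n - q) (n + p),
          (C (T m n) : Polynomial ℝ) • (fun a : Fin p => A ((a:ℕ)+1) m))).det := by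
        rw [det_updateRow_finset_sum]
    _ = X * base.det := by
        have hrow : (∑ m ∈ Finset.Icc (n - q) (n + p),
            (C (T m n) : Polynomial ℝ) • (fun a : Fin p => A ((a:ℕ)+1) m))
            = (X : Polynomial ℝ) • (fun a : Fin p => A ((a:ℕ)+1) n) := by
          funext a
          simp only [Finset.sum_apply, Pi.smul_apply, smul_eq_mul]
          rw [← hArec ((a:ℕ)+1) (by omega) (by have := a.isLt; omega) n]
          exact Finset.sum_congr rfl fun m _ => mul_comm _ _
        rw [hrow, Matrix.det_updateRow_smul]
        have hb0 : (fun a : Fin p => A ((a:ℕ)+1) n) = base i0 := by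
          funext a
          show A ((a:ℕ)+1) n = (if (0:ℕ) = 0 then A ((a:ℕ)+1) n else A ((a:ℕ)+1) (N+0))
          rw [if_pos rfl]
        rw [hb0, Matrix.updateRow_eq_self]
    _ = X * (Matrix.of fun i a : Fin p =>
        if (i:ℕ) = 0 then A ((a:ℕ)+1) n else A ((a:ℕ)+1) (N + (i:ℕ))).det := rfl

private lemma QM_zero (hp : 1 ≤ p) (m : ℕ) (hm1 : N + 1 ≤ m) (hm2 : m ≤ N + p - 1) :
    (Matrix.of fun i a : Fin p =>
        if (i:ℕ) = 0 then A ((a:ℕ)+1) m else A ((a:ℕ)+1) (N + (i:ℕ))).det = 0 := by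
  apply Matrix.det_zero_of_row_eq (i := (⟨0, hp⟩ : Fin p)) (j := ⟨m - N, by omega⟩)
  · intro h
    have := congrArg Fin.val h
    simp only at this
    omega
  · funext a
    show (if (0:ℕ) = 0 then A ((a:ℕ)+1) m else A ((a:ℕ)+1) (N+0))
      = (if m - N = 0 then A ((a:ℕ)+1) m else A ((a:ℕ)+1) (N+(m-N)))
    rw [if_pos rfl, if_neg (by omega)]
    congr 1
    omega

private lemma QM_top (hp : 1 ≤ p) :
    (Matrix.of fun i a : Fin p =>
        if (i:ℕ) = 0 then A ((a:ℕ)+1) (N + p) else A ((a:ℕ)+1) (N + (i:ℕ))).det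
      = (-1:Polynomial ℝ)^(p-1)
        * (Matrix.of fun i a : Fin p => A ((a:ℕ)+1) (N + 1 + (i:ℕ))).det := by
  obtain ⟨p', rfl⟩ : ∃ p', p = p' + 1 := ⟨p-1, by omega⟩
  have hsub : (Matrix.of fun i a : Fin (p'+1) =>
      if (i:ℕ) = 0 then A ((a:ℕ)+1) (N + (p'+1)) else A ((a:ℕ)+1) (N + (i:ℕ)))
      = (Matrix.of fun i a : Fin (p'+1) =>
          A ((a:ℕ)+1) (N + 1 + (i:ℕ))).submatrix (⇑((finRotate (p'+1))⁻¹)) id := by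
    refine Matrix.ext fun i a => ?_
    rw [Matrix.submatrix_apply, id_eq, Matrix.of_apply, Matrix.of_apply]
    by_cases hi : (i:ℕ) = 0
    · rw [if_pos hi]
      have hinv : (finRotate (p'+1))⁻¹ i = Fin.last p' := by
        rw [Equiv.Perm.inv_def, Equiv.symm_apply_eq, finRotate_last]
        exact Fin.ext hi
      rw [hinv]
      congr 1
      simp [Fin.last]
      omega
    · rw [if_neg hi]
      have hinv : (finRotate (p'+1))⁻¹ i = ⟨(i:ℕ) - 1, by have := i.isLt; omega⟩ := by
        rw [Equiv.Perm.inv_def, Equiv.symm_apply_eq, finRotate_succ_apply]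
        have hilt := i.isLt
        rcases Nat.eq_zero_or_pos p' with hp' | hp'
        · exfalso
          subst hp'
          omega
        · apply Fin.ext
          rw [Fin.add_def]
          simp only [Fin.val_one']
          rw [Nat.mod_eq_of_lt (by omega : 1 < p'+1)]
          rw [Nat.mod_eq_of_lt (by omega)]
          omega
      rw [hinv]
      congr 1
      simp only
      omega
  rw [hsub, Matrix.det_permute, map_inv, sign_finRotate]
  simp only [Nat.add_sub_cancel, inv_pow, Units.val_pow_eq_pow_val, Units.val_neg,
    Units.val_one, Int.cast_pow, Int.cast_neg, Int.cast_one]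
  congr 1
  rw [← inv_pow]
  norm_num

private lemma det_orient (M : ℕ) :
    (Matrix.of fun i a : Fin p => A ((a:ℕ)+1) (M + (i:ℕ))).det
      = (Matrix.of fun a b : Fin p => A ((a:ℕ)+1) (M + (b:ℕ))).det := by
  rw [← Matrix.det_transpose (Matrix.of fun a b : Fin p => A ((a:ℕ)+1) (M + (b:ℕ)))]
  congr 1
end


/-- Christoffel–Darboux formula for the determinantal polynomials of a `(p,q)`-banded
matrix with nonvanishing extreme diagonals:
`α_N β_N (x−y) ∑_{n=0}^{N} Q_{n,N}(x) R_{n,N}(y) = P_{N+1}(x)P_N(y) − P_N(x)P_{N+1}(y)`. -/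
theorem christoffel_darboux
    (p q : ℕ) (hp : 1 ≤ p) (hq : 1 ≤ q)
    (T : ℕ → ℕ → ℝ)
    (hband : ∀ i j, (j + p < i ∨ i + q < j) → T i j = 0)
    (hext : ∀ n, T (n + p) n ≠ 0 ∧ T n (n + q) ≠ 0)
    (ν : ℕ → ℕ → ℝ) (A : ℕ → ℕ → Polynomial ℝ)
    (hA0 : ∀ a, 1 ≤ a → a ≤ p → ∀ n, n < a - 1 → A a n = 0)
    (hA1 : ∀ a, 1 ≤ a → a ≤ p → A a (a - 1) = 1)
    (hAconst : ∀ a, 1 ≤ a → a ≤ p → ∀ j, a ≤ j → j ≤ p - 1 → A a j = Polynomial.C (ν a j))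
    (hArec : ∀ a, 1 ≤ a → a ≤ p → ∀ n,
      ∑ m ∈ Finset.Icc (n - q) (n + p), A a m * Polynomial.C (T m n)
        = Polynomial.X * A a n)
    (ξ : ℕ → ℕ → ℝ) (B : ℕ → ℕ → Polynomial ℝ)
    (hB0 : ∀ b, 1 ≤ b → b ≤ q → ∀ n, n < b - 1 → B b n = 0)
    (hB1 : ∀ b, 1 ≤ b → b ≤ q → B b (b - 1) = 1)
    (hBconst : ∀ b, 1 ≤ b → b ≤ q → ∀ j, b ≤ j → j ≤ q - 1 → B b j = Polynomial.C (ξ b j))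
    (hBrec : ∀ b, 1 ≤ b → b ≤ q → ∀ n,
      ∑ m ∈ Finset.Icc (n - p) (n + q), Polynomial.C (T n m) * B b m
        = Polynomial.X * B b n)
    (P : ℕ → Polynomial ℝ)
    (hP0 : P 0 = 1)
    (hPsucc : ∀ N, P (N + 1) = (Matrix.of fun i j : Fin (N + 1) => T i j).charpoly)
    (α : ℕ → ℝ)
    (hα : ∀ N, α N = (-1 : ℝ) ^ ((p - 1) * N) * ∏ k ∈ Finset.range N, T (k + p) k)
    (β : ℕ → ℝ)
    (hβ : ∀ N, β N = (-1 : ℝ) ^ ((q - 1) * N) * ∏ k ∈ Finset.range N, T k (k + q))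
    (Q : ℕ → ℕ → Polynomial ℝ)
    (hQ : ∀ n N, Q n N = (Matrix.of fun i a : Fin p =>
        if (i : ℕ) = 0 then A ((a : ℕ) + 1) n else A ((a : ℕ) + 1) (N + (i : ℕ))).det)
    (R : ℕ → ℕ → Polynomial ℝ)
    (hR : ∀ n N, R n N = (Matrix.of fun i b : Fin q =>
        if (i : ℕ) = 0 then B ((b : ℕ) + 1) n else B ((b : ℕ) + 1) (N + (i : ℕ))).det) :
    ∀ (N : ℕ) (x y : ℝ),
      α N * β N * (x - y) * ∑ n ∈ Finset.range (N + 1), (Q n N).eval x * (R n N).eval y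
        = (P (N + 1)).eval x * (P N).eval y - (P N).eval x * (P (N + 1)).eval y := by
  intro N x y
  classical
  have hband' : ∀ i j, (j + q < i ∨ i + p < j) → T j i = 0 := fun i j h =>
    hband j i (Or.symm h)
  have hBrec' : ∀ b, 1 ≤ b → b ≤ q → ∀ n,
      ∑ m ∈ Finset.Icc (n - p) (n + q), B b m * Polynomial.C (T n m)
        = Polynomial.X * B b n := by
    intro b h1 h2 n
    rw [← hBrec b h1 h2 n]
    exact Finset.sum_congr rfl fun m _ => mul_comm _ _
  have hPA := det_cm_eq p q T A hp hband (fun n => (hext n).1) hA0 hA1 hArec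
  have hPB := det_cm_eq q p (fun i j => T j i) B hq hband' (fun n => (hext n).2) hB0 hB1 hBrec'
  have hPdet : ∀ M : ℕ, (Matrix.of fun i j : Fin M =>
      (if (i:ℕ) = (j:ℕ) then (X:Polynomial ℝ) else 0) - C (T i j)).det = P M := by
    intro M
    cases M with
    | zero => rw [Matrix.det_isEmpty, hP0]
    | succ M' => rw [det_cm_charpoly, hPsucc]
  have hTrans : ∀ M : ℕ, (Matrix.of fun i j : Fin M =>
      (if (i:ℕ) = (j:ℕ) then (X:Polynomial ℝ) else 0) - C (T j i)).det
      = (Matrix.of fun i j : Fin M =>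
      (if (i:ℕ) = (j:ℕ) then (X:Polynomial ℝ) else 0) - C (T i j)).det := by
    intro M
    rw [← Matrix.det_transpose (Matrix.of fun i j : Fin M =>
      (if (i:ℕ) = (j:ℕ) then (X:Polynomial ℝ) else 0) - C (T i j))]
    congr 1
    refine Matrix.ext fun i j => ?_
    rw [Matrix.transpose_apply, Matrix.of_apply, Matrix.of_apply]
    congr 1
    by_cases h : (i:ℕ) = (j:ℕ)
    · rw [if_pos h, if_pos h.symm]
    · rw [if_neg h, if_neg (fun hc => h hc.symm)]
  have hPA' : ∀ M : ℕ, P M = C (α M)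
      * (Matrix.of fun a b : Fin p => A ((a:ℕ)+1) (M + (b:ℕ))).det := by
    intro M
    rw [← hPdet M, hPA M, hα M]
  have hPB' : ∀ M : ℕ, P M = C (β M)
      * (Matrix.of fun a b : Fin q => B ((a:ℕ)+1) (M + (b:ℕ))).det := by
    intro M
    rw [← hPdet M, ← hTrans M, hPB M, hβ M]
  set DAx : ℕ → ℝ := fun M =>
    ((Matrix.of fun a b : Fin p => A ((a:ℕ)+1) (M + (b:ℕ))).det).eval x with hDAx
  set DBy : ℕ → ℝ := fun M =>
    ((Matrix.of fun a b : Fin q => B ((a:ℕ)+1) (M + (b:ℕ))).det).eval y with hDBy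
  have hPAx : ∀ M : ℕ, (P M).eval x = α M * DAx M := by
    intro M
    simp only [hDAx]
    rw [hPA' M, eval_mul, eval_C]
  have hPBy : ∀ M : ℕ, (P M).eval y = β M * DBy M := by
    intro M
    simp only [hDBy]
    rw [hPB' M, eval_mul, eval_C]
  set qe : ℕ → ℝ := fun m => (Q m N).eval x with hqe
  set re : ℕ → ℝ := fun m => (R m N).eval y with hre
  have hqrec : ∀ n : ℕ, x * qe n = ∑ m ∈ Finset.Icc (n - q) (n + p), T m n * qe m := by
    intro n
    have h := QM_rec p q N T A hp hArec n
    have h2 := congrArg (fun r => Polynomial.eval x r) h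
    simp only [eval_finset_sum, eval_mul, eval_C, eval_X] at h2
    simp only [hqe, hQ]
    exact h2.symm
  have hrrec : ∀ n : ℕ, y * re n = ∑ m ∈ Finset.Icc (n - p) (n + q), T n m * re m := by
    intro n
    have h := QM_rec q p N (fun i j => T j i) B hq hBrec' n
    have h2 := congrArg (fun r => Polynomial.eval y r) h
    simp only [eval_finset_sum, eval_mul, eval_C, eval_X] at h2
    simp only [hre, hR]
    exact h2.symm
  have hqzero : ∀ m : ℕ, N + 1 ≤ m → m ≤ N + p - 1 → qe m = 0 := by
    intro m h1 h2
    simp only [hqe, hQ]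
    rw [QM_zero p N A hp m h1 h2, eval_zero]
  have hrzero : ∀ m : ℕ, N + 1 ≤ m → m ≤ N + q - 1 → re m = 0 := by
    intro m h1 h2
    simp only [hre, hR]
    rw [QM_zero q N B hq m h1 h2, eval_zero]
  have hqtop : qe (N + p) = (-1:ℝ)^(p-1) * DAx (N+1) := by
    simp only [hqe, hQ, hDAx]
    rw [QM_top p N A hp, eval_mul, eval_pow, det_orient p A (N+1)]
    norm_num
  have hrtop : re (N + q) = (-1:ℝ)^(q-1) * DBy (N+1) := by
    simp only [hre, hR, hDBy]
    rw [QM_top q N B hq, eval_mul, eval_pow, det_orient q B (N+1)]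
    norm_num
  have hqNN : qe N = DAx N := by
    simp only [hqe, hQ, hDAx]
    rw [← det_orient p A N]
    congr 2
    refine Matrix.ext fun i a => ?_
    simp only [Matrix.of_apply]
    by_cases h : (i:ℕ) = 0
    · simp [h]
    · rw [if_neg h]
  have hrNN : re N = DBy N := by
    simp only [hre, hR, hDBy]
    rw [← det_orient q B N]
    congr 2
    refine Matrix.ext fun i a => ?_
    simp only [Matrix.of_apply]
    by_cases h : (i:ℕ) = 0
    · simp [h]
    · rw [if_neg h]
  set L : ℕ := N + 1 + p + q with hL
  set S : ℝ := ∑ n ∈ Finset.range (N + 1), qe n * re n with hS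
  have hxS : x * S = ∑ n ∈ Finset.range (N+1), ∑ m ∈ Finset.range L,
      T m n * qe m * re n := by
    rw [hS, Finset.mul_sum]
    refine Finset.sum_congr rfl fun n hn => ?_
    rw [Finset.mem_range] at hn
    rw [← mul_assoc, hqrec n, Finset.sum_mul]
    have hsub : Finset.Icc (n - q) (n + p) ⊆ Finset.range L := by
      intro m hm
      rw [Finset.mem_Icc] at hm
      rw [Finset.mem_range, hL]
      omega
    have hvan : ∀ m ∈ Finset.range L, m ∉ Finset.Icc (n - q) (n + p) →
        T m n * qe m * re n = 0 := by
      intro m _ hm'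
      rw [Finset.mem_Icc] at hm'
      have hT : T m n = 0 := by
        rcases Nat.lt_or_ge m (n - q) with h | h
        · exact hband _ _ (Or.inr (by omega))
        · exact hband _ _ (Or.inl (by omega))
      rw [hT, zero_mul, zero_mul]
    rw [← Finset.sum_subset hsub hvan]
  have hyS : y * S = ∑ m ∈ Finset.range (N+1), ∑ n ∈ Finset.range L,
      T m n * qe m * re n := by
    rw [hS, Finset.mul_sum]
    refine Finset.sum_congr rfl fun n hn => ?_
    rw [Finset.mem_range] at hn
    rw [show y * (qe n * re n) = qe n * (y * re n) by ring, hrrec n, Finset.mul_sum]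
    have hsub : Finset.Icc (n - p) (n + q) ⊆ Finset.range L := by
      intro m hm
      rw [Finset.mem_Icc] at hm
      rw [Finset.mem_range, hL]
      omega
    have hvan : ∀ m ∈ Finset.range L, m ∉ Finset.Icc (n - p) (n + q) →
        T n m * qe n * re m = 0 := by
      intro m _ hm'
      rw [Finset.mem_Icc] at hm'
      have hT : T n m = 0 := by
        rcases Nat.lt_or_ge m (n - p) with h | h
        · exact hband _ _ (Or.inl (by omega))
        · exact hband _ _ (Or.inr (by omega))
      rw [hT, zero_mul, zero_mul]
    rw [← Finset.sum_subset hsub hvan]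
    exact Finset.sum_congr rfl fun m _ => by ring
  have hsplit : ∀ g : ℕ → ℝ, ∑ m ∈ Finset.range L, g m
      = ∑ m ∈ Finset.range (N+1), g m + ∑ m ∈ Finset.Ico (N+1) L, g m := by
    intro g
    rw [Finset.range_eq_Ico, Finset.range_eq_Ico]
    exact (Finset.sum_Ico_consecutive g (by omega : 0 ≤ N+1) (by omega : N+1 ≤ L)).symm
  have htel : (x - y) * S
      = T (N+p) N * qe (N+p) * re N - T N (N+q) * qe N * re (N+q) := by
    have e1 : ∑ n ∈ Finset.range (N+1), ∑ m ∈ Finset.Ico (N+1) L,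
        T m n * qe m * re n = T (N+p) N * qe (N+p) * re N := by
      have inner : ∀ n ∈ Finset.range (N+1),
          ∑ m ∈ Finset.Ico (N+1) L, T m n * qe m * re n
            = T (N+p) n * qe (N+p) * re n := by
        intro n hn
        rw [Finset.mem_range] at hn
        refine Finset.sum_eq_single_of_mem (N+p) (by rw [Finset.mem_Ico, hL]; omega) ?_
        intro m hm hne
        rw [Finset.mem_Ico] at hm
        rcases Nat.lt_or_ge m (N+p) with h | h
        · rw [hqzero m (by omega) (by omega), mul_zero, zero_mul]
        · have hT : T m n = 0 := hband _ _ (Or.inl (by omega))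
          rw [hT, zero_mul, zero_mul]
      rw [Finset.sum_congr rfl inner]
      refine Finset.sum_eq_single_of_mem N (by rw [Finset.mem_range]; omega) ?_
      intro n hn hne
      rw [Finset.mem_range] at hn
      have hT : T (N+p) n = 0 := hband _ _ (Or.inl (by omega))
      rw [hT, zero_mul, zero_mul]
    have e2 : ∑ m ∈ Finset.range (N+1), ∑ n ∈ Finset.Ico (N+1) L,
        T m n * qe m * re n = T N (N+q) * qe N * re (N+q) := by
      have inner : ∀ m ∈ Finset.range (N+1),
          ∑ n ∈ Finset.Ico (N+1) L, T m n * qe m * re n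
            = T m (N+q) * qe m * re (N+q) := by
        intro m hm
        rw [Finset.mem_range] at hm
        refine Finset.sum_eq_single_of_mem (N+q) (by rw [Finset.mem_Ico, hL]; omega) ?_
        intro n hn hne
        rw [Finset.mem_Ico] at hn
        rcases Nat.lt_or_ge n (N+q) with h | h
        · rw [hrzero n (by omega) (by omega), mul_zero]
        · have hT : T m n = 0 := hband _ _ (Or.inr (by omega))
          rw [hT, zero_mul, zero_mul]
      rw [Finset.sum_congr rfl inner]
      refine Finset.sum_eq_single_of_mem N (by rw [Finset.mem_range]; omega) ?_
      intro m hm hne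
      rw [Finset.mem_range] at hm
      have hT : T m (N+q) = 0 := hband _ _ (Or.inr (by omega))
      rw [hT, zero_mul, zero_mul]
    have hswap : ∑ n ∈ Finset.range (N+1), ∑ m ∈ Finset.range (N+1),
        T m n * qe m * re n
        = ∑ m ∈ Finset.range (N+1), ∑ n ∈ Finset.range (N+1),
        T m n * qe m * re n := Finset.sum_comm
    have expand : (x - y) * S = x * S - y * S := by ring
    rw [expand, hxS, hyS]
    rw [Finset.sum_congr rfl fun n _ => hsplit (fun m => T m n * qe m * re n)]
    rw [Finset.sum_congr rfl fun m _ => hsplit (fun n => T m n * qe m * re n)]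
    rw [Finset.sum_add_distrib, Finset.sum_add_distrib, hswap, e1, e2]
    ring
  have hαstep : α (N+1) = (-1:ℝ)^(p-1) * T (N+p) N * α N := by
    rw [hα, hα, prod_range_succ, show (p-1)*(N+1) = (p-1)*N + (p-1) by ring, pow_add]
    ring
  have hβstep : β (N+1) = (-1:ℝ)^(q-1) * T N (N+q) * β N := by
    rw [hβ, hβ, prod_range_succ, show (q-1)*(N+1) = (q-1)*N + (q-1) by ring, pow_add]
    ring
  calc α N * β N * (x - y) * S = α N * β N * ((x - y) * S) := by ring
    _ = α N * β N * (T (N+p) N * qe (N+p) * re N - T N (N+q) * qe N * re (N+q)) := by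
        rw [htel]
    _ = (P (N + 1)).eval x * (P N).eval y - (P N).eval x * (P (N + 1)).eval y := by
        rw [hqtop, hrtop, hqNN, hrNN, hPAx, hPAx, hPBy, hPBy, hαstep, hβstep]
        ring
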